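/- Let 1 < p < ∞, m ∈ ℝ with (m+1)/p < 1, and suppose u ∈ W^{2,p}((0,∞), y^m dy) satisfies ∂_y u / y ∈ L^p((0,∞), y^m dy). Then the trace D_y u(0) = lim_{y→0} ∂_y u(y) exists and equals 0. -/

import Mathlib

open MeasureTheory Set Filter Topology
open scoped ENNReal

/-- The weighted measure `y^m dy` on `(0, ∞)`. -/
noncomputable def weightedHalfLine (m : ℝ) : Measure ℝ :=
  ((volume : Measure ℝ).restrict (Set.Ioi 0)).withDensity fun y => ENNReal.ofReal (y ^ m)

lemma aux_lintegral_lt_top {p m : ℝ} (hp : 0 < p) {f : ℝ → ℝ} (hfm : Measurable f)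
    (hf : MemLp f (ENNReal.ofReal p) (weightedHalfLine m)) :
    ∫⁻ y in Ioi (0:ℝ), ENNReal.ofReal (y ^ m) * (‖f y‖₊ : ℝ≥0∞) ^ p < ⊤ := by
  have hP0 : (ENNReal.ofReal p) ≠ 0 := by
    simp [ENNReal.ofReal_eq_zero, not_le, hp]
  have hPt : (ENNReal.ofReal p) ≠ ⊤ := ENNReal.ofReal_ne_top
  have h := hf.2
  rw [eLpNorm_eq_lintegral_rpow_enorm_toReal hP0 hPt] at h
  rw [ENNReal.toReal_ofReal hp.le] at h
  have hg : Measurable fun y => (‖f y‖₊ : ℝ≥0∞) ^ p :=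
    (hfm.nnnorm.coe_nnreal_ennreal).pow_const p
  have hw : Measurable fun y : ℝ => ENNReal.ofReal (y ^ m) :=
    ENNReal.measurable_ofReal.comp (measurable_id.pow_const m)
  change (∫⁻ x, (‖f x‖₊ : ℝ≥0∞) ^ p ∂_) ^ (1 / p) < ⊤ at h
  rw [weightedHalfLine, lintegral_withDensity_eq_lintegral_mul _ hw hg] at h
  have := (ENNReal.rpow_lt_top_iff_of_pos (by positivity : (0:ℝ) < 1 / p)).mp h
  simpa using this

lemma aux_lintegral_rpow_top {s δ : ℝ} (hs : s ≤ -1) (hδ : 0 < δ) :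
    ∫⁻ y in Ioo (0:ℝ) δ, ENNReal.ofReal (y ^ s) ∂volume = ⊤ := by
  by_contra h
  have hint : IntegrableOn (fun y : ℝ => y ^ s) (Ioo 0 δ) volume := by
    refine ⟨(measurable_id.pow_const s).aestronglyMeasurable, ?_⟩
    rw [HasFiniteIntegral]
    have heq : ∫⁻ y in Ioo (0:ℝ) δ, ‖y ^ s‖ₑ ∂volume
        = ∫⁻ y in Ioo (0:ℝ) δ, ENNReal.ofReal (y ^ s) ∂volume := by
      refine setLIntegral_congr_fun measurableSet_Ioo (fun y hy => ?_)
      exact Real.enorm_eq_ofReal (Real.rpow_nonneg hy.1.le s)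
    rw [heq]
    exact lt_top_iff_ne_top.mpr h
  rw [intervalIntegral.integrableOn_Ioo_rpow_iff hδ] at hint
  linarith

lemma aux_integrableOn {p m : ℝ} (hp : 1 < p) (hm : m + 1 < p) {f : ℝ → ℝ}
    (hfm : Measurable f) (hf : MemLp f (ENNReal.ofReal p) (weightedHalfLine m)) :
    IntegrableOn f (Ioc 0 1) volume := by
  have hp0 : 0 < p := by linarith
  set q : ℝ := p.conjExponent with hq
  have hpq : p.HolderConjugate q := Real.HolderConjugate.conjExponent hp
  set F : ℝ → ℝ≥0∞ := fun y => (‖f y‖₊ : ℝ≥0∞) * ENNReal.ofReal (y ^ (m / p)) with hF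
  set G : ℝ → ℝ≥0∞ := fun y => ENNReal.ofReal (y ^ (-(m / p))) with hG
  have hFmeas : Measurable F :=
    (hfm.nnnorm.coe_nnreal_ennreal).mul
      (ENNReal.measurable_ofReal.comp (measurable_id.pow_const _))
  have hGmeas : Measurable G := ENNReal.measurable_ofReal.comp (measurable_id.pow_const _)
  have holder := ENNReal.lintegral_mul_le_Lp_mul_Lq (volume.restrict (Ioc (0:ℝ) 1)) hpq
    hFmeas.aemeasurable hGmeas.aemeasurable
  have hsplit : ∫⁻ y in Ioc (0:ℝ) 1, (‖f y‖₊ : ℝ≥0∞) ∂volume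
      = ∫⁻ y in Ioc (0:ℝ) 1, (F * G) y ∂volume := by
    refine setLIntegral_congr_fun measurableSet_Ioc (fun y hy => ?_)
    have hy0 : 0 < y := hy.1
    simp only [Pi.mul_apply, hF, hG]
    rw [mul_assoc, ← ENNReal.ofReal_mul (Real.rpow_nonneg hy0.le _),
      ← Real.rpow_add hy0]
    simp
  have hFp : ∫⁻ y in Ioc (0:ℝ) 1, F y ^ p ∂volume < ⊤ := by
    have heq : ∫⁻ y in Ioc (0:ℝ) 1, F y ^ p ∂volume
        = ∫⁻ y in Ioc (0:ℝ) 1, ENNReal.ofReal (y ^ m) * (‖f y‖₊ : ℝ≥0∞) ^ p ∂volume := by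
      refine setLIntegral_congr_fun measurableSet_Ioc (fun y hy => ?_)
      have hy0 : 0 < y := hy.1
      rw [hF]
      rw [ENNReal.mul_rpow_of_nonneg _ _ hp0.le,
        ENNReal.ofReal_rpow_of_nonneg (Real.rpow_nonneg hy0.le _) hp0.le,
        ← Real.rpow_mul hy0.le, div_mul_cancel₀ _ hp0.ne', mul_comm]
    rw [heq]
    exact lt_of_le_of_lt (lintegral_mono_set Ioc_subset_Ioi_self) (aux_lintegral_lt_top hp0 hfm hf)
  have hGq : ∫⁻ y in Ioc (0:ℝ) 1, G y ^ q ∂volume < ⊤ := by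
    have hs : (-1:ℝ) < -(m / p) * q := by
      have hq' : q = p / (p - 1) := rfl
      have hkey : -(m / p) * q = -m / (p - 1) := by
        rw [hq']
        have hp1 : (0:ℝ) < p - 1 := by linarith
        field_simp
      rw [hkey, lt_div_iff₀ (by linarith : (0:ℝ) < p - 1)]
      linarith
    have hint : IntegrableOn (fun y : ℝ => y ^ (-(m / p) * q)) (Ioo 0 1) volume :=
      (intervalIntegral.integrableOn_Ioo_rpow_iff one_pos).mpr hs
    have hfin := hint.2
    rw [HasFiniteIntegral] at hfin
    have heq : ∫⁻ y in Ioc (0:ℝ) 1, G y ^ q ∂volume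
        = ∫⁻ y in Ioo (0:ℝ) 1, ‖y ^ (-(m / p) * q)‖ₑ ∂volume := by
      rw [← setLIntegral_congr Ioo_ae_eq_Ioc]
      refine setLIntegral_congr_fun measurableSet_Ioo (fun y hy => ?_)
      have hy0 : 0 < y := hy.1
      rw [hG, ENNReal.ofReal_rpow_of_nonneg (Real.rpow_nonneg hy0.le _) hpq.symm.nonneg,
        ← Real.rpow_mul hy0.le,
        Real.enorm_eq_ofReal (Real.rpow_nonneg hy0.le _)]
    rw [heq]
    exact hfin
  refine ⟨hfm.aestronglyMeasurable, ?_⟩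
  rw [HasFiniteIntegral]
  calc ∫⁻ y in Ioc (0:ℝ) 1, (‖f y‖₊ : ℝ≥0∞) ∂volume
      = ∫⁻ y in Ioc (0:ℝ) 1, (F * G) y ∂volume := hsplit
    _ ≤ (∫⁻ y in Ioc (0:ℝ) 1, F y ^ p ∂volume) ^ (1/p)
        * (∫⁻ y in Ioc (0:ℝ) 1, G y ^ q ∂volume) ^ (1/q) := holder
    _ < ⊤ := by
        have h1 : (∫⁻ y in Ioc (0:ℝ) 1, F y ^ p ∂volume) ^ (1/p) < ⊤ :=
          ENNReal.rpow_lt_top_of_nonneg (by positivity) hFp.ne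
        have h2 : (∫⁻ y in Ioc (0:ℝ) 1, G y ^ q ∂volume) ^ (1/q) < ⊤ :=
          ENNReal.rpow_lt_top_of_nonneg (le_of_lt (by simp [one_div, hpq.symm.pos])) hGq.ne
        exact ENNReal.mul_lt_top h1 h2

theorem deriv_trace_zero (p m : ℝ) (hp : 1 < p) (hm : (m + 1) / p < 1) (u : ℝ → ℝ)
    (hd1 : ∀ y ∈ Set.Ioi (0:ℝ), DifferentiableAt ℝ u y)
    (hd2 : ∀ y ∈ Set.Ioi (0:ℝ), DifferentiableAt ℝ (deriv u) y)
    (hu : MemLp u (ENNReal.ofReal p) (weightedHalfLine m))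
    (hu' : MemLp (deriv u) (ENNReal.ofReal p) (weightedHalfLine m))
    (hu'' : MemLp (deriv (deriv u)) (ENNReal.ofReal p) (weightedHalfLine m))
    (hquot : MemLp (fun y => deriv u y / y) (ENNReal.ofReal p) (weightedHalfLine m)) :
    Tendsto (deriv u) (𝓝[>] (0:ℝ)) (𝓝 0) := by
  have hp0 : (0:ℝ) < p := by linarith
  have hmp : m + 1 < p := by
    have := (div_lt_one hp0).mp hm
    linarith
  have hP0 : (ENNReal.ofReal p) ≠ 0 := by simp [ENNReal.ofReal_eq_zero, not_le, hp0]
  have hPt : (ENNReal.ofReal p) ≠ ⊤ := ENNReal.ofReal_ne_top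
  have hu'meas : Measurable (deriv u) := measurable_deriv u
  have hu''meas : Measurable (deriv (deriv u)) := measurable_deriv (deriv u)
  have hInt : IntegrableOn (deriv (deriv u)) (Ioc 0 1) volume :=
    aux_integrableOn hp hmp hu''meas hu''
  set F : ℝ → ℝ := fun x => ∫ t in Ioc (0:ℝ) x, deriv (deriv u) t with hFdef
  have hFcont : ContinuousOn F (Icc 0 1) :=
    intervalIntegral.continuousOn_primitive (by rwa [integrableOn_Icc_iff_integrableOn_Ioc])
  have hF0 : F 0 = 0 := by simp [hFdef]
  have hkey : ∀ x ∈ Ioc (0:ℝ) 1, deriv u x = deriv u 1 - (F 1 - F x) := by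
    intro x hx
    have hx0 : 0 < x := hx.1
    have hx1 : x ≤ 1 := hx.2
    have hii : IntervalIntegrable (deriv (deriv u)) volume x 1 := by
      rw [intervalIntegrable_iff_integrableOn_Ioc_of_le hx1]
      exact hInt.mono_set (Ioc_subset_Ioc_left hx0.le)
    have hftc : ∫ t in x..1, deriv (deriv u) t = deriv u 1 - deriv u x := by
      refine intervalIntegral.integral_eq_sub_of_hasDerivAt (fun t ht => ?_) hii
      rw [uIcc_of_le hx1] at ht
      exact (hd2 t (lt_of_lt_of_le hx0 ht.1)).hasDerivAt
    have hsum : F x + ∫ t in Ioc x 1, deriv (deriv u) t = F 1 := by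
      rw [hFdef]
      rw [← setIntegral_union (Ioc_disjoint_Ioc_of_le le_rfl) measurableSet_Ioc
        (hInt.mono_set (Ioc_subset_Ioc_right hx1)) (hInt.mono_set (Ioc_subset_Ioc_left hx0.le)),
        Ioc_union_Ioc_eq_Ioc hx0.le hx1]
    rw [intervalIntegral.integral_of_le hx1] at hftc
    linarith
  have hFtends : Tendsto F (𝓝[>] (0:ℝ)) (𝓝 0) := by
    have h := hFcont 0 ⟨le_rfl, zero_le_one⟩
    rw [ContinuousWithinAt, hF0] at h
    have hle : 𝓝[>] (0:ℝ) ≤ 𝓝[Icc (0:ℝ) 1] 0 := by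
      rw [← nhdsWithin_Ioc_eq_nhdsGT (zero_lt_one (α := ℝ))]
      exact nhdsWithin_mono _ Ioc_subset_Icc_self
    exact h.mono_left hle
  have hlim : Tendsto (deriv u) (𝓝[>] (0:ℝ)) (𝓝 (deriv u 1 - F 1)) := by
    have h1 : Tendsto (fun x => deriv u 1 - (F 1 - F x)) (𝓝[>] (0:ℝ))
        (𝓝 (deriv u 1 - (F 1 - 0))) :=
      tendsto_const_nhds.sub (tendsto_const_nhds.sub hFtends)
    rw [sub_zero] at h1
    refine Tendsto.congr' ?_ h1
    filter_upwards [Ioc_mem_nhdsGT_of_mem (⟨le_refl (0:ℝ), zero_lt_one⟩ : (0:ℝ) ∈ Ico (0:ℝ) 1)]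
      with x hx
    exact (hkey x hx).symm
  set l : ℝ := deriv u 1 - F 1 with hldef
  have hl0 : l = 0 := by
    by_contra hl
    have habs : Tendsto (fun y => |deriv u y|) (𝓝[>] (0:ℝ)) (𝓝 |l|) := hlim.abs
    have hev : ∀ᶠ y in 𝓝[>] (0:ℝ), |l| / 2 < |deriv u y| :=
      habs.eventually (eventually_gt_nhds (half_lt_self (abs_pos.mpr hl)))
    obtain ⟨δ, hδmem, hδ⟩ := mem_nhdsGT_iff_exists_Ioo_subset.mp hev
    set c : ℝ := |l| / 2 with hcdef
    have hc0 : 0 < c := half_pos (abs_pos.mpr hl)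
    have hδ0 : (0:ℝ) < δ := hδmem
    have hfin := hquot.2
    rw [eLpNorm_eq_lintegral_rpow_enorm_toReal hP0 hPt, ENNReal.toReal_ofReal hp0.le] at hfin
    have hqmeas : Measurable fun y => ((‖deriv u y / y‖₊ : ℝ≥0∞)) ^ p :=
      (((hu'meas.div measurable_id).nnnorm).coe_nnreal_ennreal).pow_const p
    have hw : Measurable fun y : ℝ => ENNReal.ofReal (y ^ m) :=
      ENNReal.measurable_ofReal.comp (measurable_id.pow_const m)
    change (∫⁻ x, (‖deriv u x / x‖₊ : ℝ≥0∞) ^ p ∂_) ^ (1 / p) < ⊤ at hfin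
    rw [weightedHalfLine, lintegral_withDensity_eq_lintegral_mul _ hw hqmeas] at hfin
    have hbig : ∫⁻ y in Ioi (0:ℝ),
        ((fun y : ℝ => ENNReal.ofReal (y ^ m)) * fun y => ((‖deriv u y / y‖₊ : ℝ≥0∞)) ^ p) y
          ∂volume = ⊤ := by
      rw [eq_top_iff]
      have hc_ne : ENNReal.ofReal (c ^ p) ≠ 0 := by
        simp only [ne_eq, ENNReal.ofReal_eq_zero, not_le]
        positivity
      calc (⊤:ℝ≥0∞)
          = ENNReal.ofReal (c ^ p)
            * ∫⁻ y in Ioo (0:ℝ) δ, ENNReal.ofReal (y ^ (m - p)) ∂volume := by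
            rw [aux_lintegral_rpow_top (by linarith) hδ0, ENNReal.mul_top hc_ne]
        _ = ∫⁻ y in Ioo (0:ℝ) δ,
              ENNReal.ofReal (c ^ p) * ENNReal.ofReal (y ^ (m - p)) ∂volume :=
            (lintegral_const_mul _
              (ENNReal.measurable_ofReal.comp (measurable_id.pow_const _))).symm
        _ ≤ ∫⁻ y in Ioo (0:ℝ) δ,
              ((fun y : ℝ => ENNReal.ofReal (y ^ m))
                * fun y => ((‖deriv u y / y‖₊ : ℝ≥0∞)) ^ p) y ∂volume := by
            refine setLIntegral_mono' measurableSet_Ioo fun y hy => ?_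
            have hy0 : 0 < y := hy.1
            have hcy : c / y ≤ |deriv u y / y| := by
              rw [abs_div, abs_of_pos hy0]
              gcongr
              exact (hδ hy).le
            have h1 : ENNReal.ofReal (c ^ p) * ENNReal.ofReal (y ^ (m - p))
                = ENNReal.ofReal (y ^ m) * ENNReal.ofReal ((c / y) ^ p) := by
              rw [← ENNReal.ofReal_mul (by positivity), ← ENNReal.ofReal_mul (by positivity)]
              congr 1
              rw [Real.div_rpow hc0.le hy0.le, Real.rpow_sub hy0]
              field_simp
            rw [h1]
            simp only [Pi.mul_apply]
            refine mul_le_mul_right ?_ _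
            calc ENNReal.ofReal ((c / y) ^ p)
                = (ENNReal.ofReal (c / y)) ^ p :=
                  (ENNReal.ofReal_rpow_of_nonneg (by positivity) hp0.le).symm
              _ ≤ (ENNReal.ofReal |deriv u y / y|) ^ p :=
                  ENNReal.rpow_le_rpow (ENNReal.ofReal_le_ofReal hcy) hp0.le
              _ = (‖deriv u y / y‖₊ : ℝ≥0∞) ^ p := by
                  rw [← Real.enorm_eq_ofReal_abs]
                  rfl
        _ ≤ ∫⁻ y in Ioi (0:ℝ),
              ((fun y : ℝ => ENNReal.ofReal (y ^ m))
                * fun y => ((‖deriv u y / y‖₊ : ℝ≥0∞)) ^ p) y ∂volume :=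
            lintegral_mono_set (fun y hy => hy.1)
    rw [hbig, ENNReal.top_rpow_of_pos (by positivity)] at hfin
    exact (lt_irrefl _ hfin)
  exact hl0 ▸ hlim
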